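/- With R, S, Π_ε as in the tt*-Toda setup, let D = I_n - Π_ε R^T. Then D has rank 1, and for all x ∈ ℂ^n, D x = (e_n^* (S + S^T) x) e_n, where e_n is the last standard basis vector. Moreover (Π_ε R^T)² = I_n. -/

import Mathlib

open Matrix

theorem stmt14 (n : ℕ) (hn : 2 ≤ n) (p : ℕ → ℝ)
    (hpal : ∀ k, 1 ≤ k → k ≤ n - 1 → p (n - k) = (-1 : ℝ) ^ n * p k)
    (R S Pe : Matrix (Fin n) (Fin n) ℝ)
    (hR : ∀ i j : Fin n, R i j =
      if (j : ℕ) = 0 then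
        (if (i : ℕ) = n - 1 then -(-1 : ℝ) ^ n else -p (n - 1 - (i : ℕ)))
      else (if (i : ℕ) + 1 = (j : ℕ) then 1 else 0))
    (hS : ∀ i j : Fin n, S i j =
      if i = j then 1 else if i < j then (-1 : ℝ) ^ n * p ((j : ℕ) - (i : ℕ)) else 0)
    (hPe : ∀ i j : Fin n, Pe i j =
      if (i : ℕ) + 1 = (j : ℕ) then 1
      else if (i : ℕ) = n - 1 ∧ (j : ℕ) = 0 then (-1 : ℝ) ^ n else 0)
    (D : Matrix (Fin n) (Fin n) ℝ) (hD : D = 1 - Pe * Rᵀ) :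
    D.rank = 1 ∧
    (∀ x : Fin n → ℝ, D.mulVec x =
      ((S + Sᵀ).mulVec x ⟨n - 1, by omega⟩) • (Pi.single (⟨n - 1, by omega⟩ : Fin n) (1 : ℝ) : Fin n → ℝ)) ∧
    (Pe * Rᵀ) ^ 2 = 1 := by
  have hl : n - 1 < n := by omega
  set last : Fin n := ⟨n - 1, hl⟩ with hlast
  have hε : ((-1 : ℝ) ^ n) * ((-1 : ℝ) ^ n) = 1 := by
    rw [← pow_add]; exact (neg_one_pow_eq_one_iff_even (by norm_num)).2 ⟨n, rfl⟩
  -- closed form for M = Pe * Rᵀ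
  have hM : ∀ i j : Fin n, (Pe * Rᵀ) i j =
      if (i : ℕ) = n - 1 then
        (if (j : ℕ) = n - 1 then (-1 : ℝ) else -((-1 : ℝ) ^ n * p (n - 1 - (j : ℕ))))
      else (if i = j then 1 else 0) := by
    intro i j
    rw [Matrix.mul_apply]
    by_cases hi : (i : ℕ) = n - 1
    · rw [Finset.sum_eq_single (⟨0, by omega⟩ : Fin n)]
      · rw [hPe, transpose_apply, hR]
        simp only [hi]
        by_cases hj : (j : ℕ) = n - 1 <;> simp [hj] <;> ring_nf <;>
          simp [hε] <;> ring
      · intro k _ hk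
        rw [hPe]
        have hk0 : (k : ℕ) ≠ 0 := fun h => hk (Fin.ext h)
        have : (i : ℕ) + 1 ≠ (k : ℕ) := by have := k.isLt; omega
        simp [this, hk0]
      · simp
    · have hi1 : (i : ℕ) + 1 < n := by have := i.isLt; omega
      rw [Finset.sum_eq_single (⟨(i : ℕ) + 1, hi1⟩ : Fin n)]
      · rw [hPe, transpose_apply, hR]
        have : ((⟨(i : ℕ) + 1, hi1⟩ : Fin n) : ℕ) = (i : ℕ) + 1 := rfl
        simp only [this]
        have hij : ((j : ℕ) + 1 = (i : ℕ) + 1) ↔ i = j := by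
          rw [Fin.ext_iff]; omega
        by_cases h : i = j
        · subst h; simp [hi]
        · have h2 : ¬ ((j : ℕ) + 1 = (i : ℕ) + 1) := fun hh => h (hij.1 hh)
          simp [h2, h, hi, show ¬ (j : ℕ) = i from fun hh => h (Fin.ext hh.symm)]
      · intro k _ hk
        rw [hPe]
        have : (i : ℕ) + 1 ≠ (k : ℕ) := fun h => hk (Fin.ext h.symm)
        simp [this, hi]
      · simp
  -- last row of S + Sᵀ
  have hSrow : ∀ j : Fin n, (S + Sᵀ) last j =
      if (j : ℕ) = n - 1 then (2 : ℝ) else (-1 : ℝ) ^ n * p (n - 1 - (j : ℕ)) := by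
    intro j
    rw [Matrix.add_apply, transpose_apply, hS, hS]
    by_cases hj : (j : ℕ) = n - 1
    · have : j = last := Fin.ext (by simpa using hj)
      subst this
      norm_num [hj]
    · have hjl : (j : ℕ) < n - 1 := by have := j.isLt; omega
      have h1 : ¬ (last = j) := fun h => hj (by rw [← h])
      have h2 : ¬ (j = last) := fun h => h1 h.symm
      have h3 : ¬ (last < j) := by
        simp only [Fin.lt_def]; have : (last : ℕ) = n - 1 := rfl; omega
      have h4 : j < last := by
        simp only [Fin.lt_def]; exact hjl
      simp [h1, h2, h3, h4, hj, show (last : ℕ) = n - 1 from rfl]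
  -- entries of D
  have hDe : ∀ i j : Fin n, D i j =
      if (i : ℕ) = n - 1 then (S + Sᵀ) last j else 0 := by
    intro i j
    rw [hD, Matrix.sub_apply, Matrix.one_apply, hM, hSrow]
    by_cases hi : (i : ℕ) = n - 1
    · by_cases hj : (j : ℕ) = n - 1
      · have : i = j := Fin.ext (by omega)
        simp [hi, hj, this]; norm_num
      · have : ¬ i = j := fun h => hj (h ▸ hi)
        simp [hi, hj, this]
    · simp [hi]
  -- part 2
  have part2 : ∀ x : Fin n → ℝ, D.mulVec x =
      ((S + Sᵀ).mulVec x last) • (Pi.single last (1 : ℝ) : Fin n → ℝ) := by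
    intro x
    funext i
    rw [Matrix.mulVec, dotProduct]
    by_cases hi : (i : ℕ) = n - 1
    · have hil : i = last := Fin.ext (by simpa using hi)
      subst hil
      simp only [Pi.smul_apply, Pi.single_eq_same, smul_eq_mul, mul_one]
      rw [Matrix.mulVec, dotProduct]
      exact Finset.sum_congr rfl fun j _ => by rw [hDe]; simp [hi]
    · have hil : i ≠ last := fun h => hi (by rw [h])
      simp only [Pi.smul_apply, Pi.single_eq_of_ne hil, smul_eq_mul, mul_zero]
      refine Finset.sum_eq_zero fun j _ => ?_
      rw [hDe]; simp [hi]
  -- part 3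
  have part3 : (Pe * Rᵀ) ^ 2 = 1 := by
    ext i j
    rw [pow_two, Matrix.mul_apply, Matrix.one_apply]
    by_cases hi : (i : ℕ) = n - 1
    · have hil : i = last := Fin.ext (by simpa using hi)
      rw [← Finset.sum_erase_add _ _ (Finset.mem_univ last)]
      have herase : ∑ k ∈ Finset.univ.erase last, (Pe * Rᵀ) i k * (Pe * Rᵀ) k j
          = if j = last then 0 else (Pe * Rᵀ) i j := by
        by_cases hj : j = last
        · subst hj
          simp only [if_pos rfl]
          refine Finset.sum_eq_zero fun k hk => ?_
          have hk' : (k : ℕ) ≠ n - 1 := fun h =>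
            (Finset.mem_erase.1 hk).1 (Fin.ext (by simpa using h))
          have hkl : ¬ k = last := (Finset.mem_erase.1 hk).1
          rw [hM (i := k)]
          simp [hk', hkl]
        · rw [if_neg hj]
          rw [Finset.sum_eq_single j]
          · have hj' : (j : ℕ) ≠ n - 1 := fun h => hj (Fin.ext (by simpa using h))
            rw [hM (i := j) (j := j)]
            simp [hj']
          · intro k hk hkj
            have hk' : (k : ℕ) ≠ n - 1 := fun h =>
              (Finset.mem_erase.1 hk).1 (Fin.ext (by simpa using h))
            rw [hM (i := k)]
            simp [hk', hkj]
          · intro hj2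
            exact absurd (Finset.mem_erase.2 ⟨hj, Finset.mem_univ j⟩) hj2
      rw [herase]
      simp only [hM]
      by_cases hj : (j : ℕ) = n - 1
      · have hjl : j = last := Fin.ext (by simpa using hj)
        have hij : i = j := by rw [hil, hjl]
        simp [hjl, hi, hj, hlast, hij]
      · have hjl : ¬ j = last := fun h => hj (by rw [h, hlast])
        have hij : ¬ i = j := fun h => hj (h ▸ hi)
        simp [hjl, hij, hi, hj, hlast, show ¬ j = (⟨n - 1, hl⟩ : Fin n) from hjl]
    · rw [Finset.sum_eq_single i]
      · rw [hM (j := i), hM]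
        simp [hi]
      · intro k _ hk
        rw [hM (j := k)]
        simp [hi, hk.symm]
      · simp
  refine ⟨?_, part2, part3⟩
  -- rank
  have hu : (Pi.single last (1 : ℝ) : Fin n → ℝ) ≠ 0 := by
    intro h
    have := congrFun h last
    simp at this
  have hrange : LinearMap.range D.mulVecLin = ℝ ∙ (Pi.single last (1 : ℝ) : Fin n → ℝ) := by
    apply le_antisymm
    · rintro y ⟨x, rfl⟩
      rw [Matrix.mulVecLin_apply, part2]
      exact Submodule.smul_mem _ _ (Submodule.mem_span_singleton_self _)
    · rw [Submodule.span_singleton_le_iff_mem]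
      refine ⟨(2⁻¹ : ℝ) • (Pi.single last (1 : ℝ) : Fin n → ℝ), ?_⟩
      rw [Matrix.mulVecLin_apply, part2, Matrix.mulVec_smul]
      have : (S + Sᵀ) *ᵥ Pi.single last (1 : ℝ) = fun i => (S + Sᵀ) i last * 1 :=
        Matrix.mulVec_single _ _ _
      rw [this]
      simp only [Pi.smul_apply, mul_one, smul_eq_mul]
      rw [hSrow]
      simp [hlast]
  rw [Matrix.rank, hrange, finrank_span_singleton hu]
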